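/- Let h ∈ ℂ[[z]] have a simple zero at z = 0 and let g ∈ ℂ((z)). If (dg/dz)·h + (1/2)·g·(dh/dz) ∈ ℂ[[z]], then g ∈ ℂ[[z]]. -/

import Mathlib

open PowerSeries

noncomputable section

/-- `K = ℂ((z))`, the field of formal Laurent series. -/
abbrev K : Type := LaurentSeries ℂ

/-- The formal derivative `d/dz` on Laurent series. -/
def lD (f : K) : K where
  coeff n := ((n : ℂ) + 1) * f.coeff (n + 1)
  isPWO_support' := by
    apply Set.IsPWO.mono ((f.isPWO_support).image_of_monotone
      (f := fun m : ℤ => m - 1) (fun a b hab => by simpa using hab))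
    intro n hn
    refine ⟨n + 1, ?_, by ring⟩
    intro h0
    apply hn
    simp [h0]

/-- `ℂ[[z]]` viewed as a subring of `ℂ((z))`. -/
def Oz : Subring K := (HahnSeries.ofPowerSeries ℤ ℂ).range

/-- `h ∈ ℂ[[z]]` has a simple zero at `z = 0`. -/
def SimpleZero (h : PowerSeries ℂ) : Prop :=
  PowerSeries.coeff 0 h = 0 ∧ PowerSeries.coeff 1 h ≠ 0

theorem lD_coeff (f : K) (m : ℤ) : (lD f).coeff m = ((m : ℂ) + 1) * f.coeff (m + 1) := rfl

theorem my_order_eq {x : K} {n : ℤ} (h1 : x.coeff n ≠ 0)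
    (h2 : ∀ m, m < n → x.coeff m = 0) : x.order = n := by
  have hx : x ≠ 0 := fun h => h1 (by simp [h])
  refine le_antisymm (HahnSeries.order_le_of_coeff_ne_zero h1) ?_
  rw [HahnSeries.order_of_ne hx, Set.IsWF.le_min_iff]
  intro m hm
  exact not_lt.mp fun hlt => hm (h2 m hlt)

theorem my_leadingCoeff {x : K} (hx : x ≠ 0) : x.leadingCoeff = x.coeff x.order := by
  exact HahnSeries.leadingCoeff_eq

/-- If `h ∈ ℂ[[z]]` has a simple zero at `z = 0`, `g ∈ ℂ((z))`, and
`(dg/dz)·h + (1/2)·g·(dh/dz) ∈ ℂ[[z]]`, then `g ∈ ℂ[[z]]`. -/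
theorem stmt3 (h : PowerSeries ℂ) (hsz : SimpleZero h) (g : K)
    (hreg : lD g * (HahnSeries.ofPowerSeries ℤ ℂ h) +
      (1 / 2 : K) * g * lD (HahnSeries.ofPowerSeries ℤ ℂ h) ∈ Oz) :
    g ∈ Oz := by
  obtain ⟨h0, h1⟩ := hsz
  set H : K := HahnSeries.ofPowerSeries ℤ ℂ h with hH
  have HC : ∀ i : ℤ, H.coeff i = if i < 0 then 0 else PowerSeries.coeff i.natAbs h :=
    fun i => PowerSeries.coeff_coe h i
  by_cases hg0 : g = 0
  · exact hg0 ▸ Oz.zero_mem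
  set n : ℤ := g.order with hn
  have gn : g.coeff n ≠ 0 := mt HahnSeries.coeff_order_eq_zero.mp hg0
  by_cases hpos : 0 ≤ n
  · exact ⟨PowerSeries.X ^ n.toNat * g.powerSeriesPart,
      LaurentSeries.X_order_mul_powerSeriesPart (Int.toNat_of_nonneg hpos)⟩
  push_neg at hpos
  exfalso
  -- coefficients of H
  have H1 : H.coeff 1 = PowerSeries.coeff 1 h := by rw [HC]; norm_num
  have Hne : H ≠ 0 := fun hz => h1 (by rw [← H1, hz, HahnSeries.coeff_zero])
  have Hord : H.order = 1 := by
    apply my_order_eq (H1 ▸ h1)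
    intro m hm
    rcases lt_or_eq_of_le (by omega : m ≤ 0) with hm0 | rfl
    · rw [HC, if_pos hm0]
    · rw [HC]; simpa using h0
  -- order of lD g
  have Dgc : (lD g).coeff (n - 1) = (n : ℂ) * g.coeff n := by
    rw [lD_coeff, sub_add_cancel]; push_cast; ring_nf
  have ncne : ((n : ℂ)) ≠ 0 := Int.cast_ne_zero.mpr (by omega)
  have Dgne : (lD g).coeff (n - 1) ≠ 0 := by rw [Dgc]; exact mul_ne_zero ncne gn
  have Dgzero : ∀ m, m < n - 1 → (lD g).coeff m = 0 := by
    intro m hm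
    rw [lD_coeff, HahnSeries.coeff_eq_zero_of_lt_order (by omega), mul_zero]
  have Dg0 : lD g ≠ 0 := fun hz => Dgne (by rw [hz, HahnSeries.coeff_zero])
  have Dgord : (lD g).order = n - 1 := my_order_eq Dgne Dgzero
  -- order of lD H
  have DHc : (lD H).coeff 0 = PowerSeries.coeff 1 h := by
    rw [lD_coeff, zero_add, H1]; ring
  have DHne : (lD H).coeff 0 ≠ 0 := DHc ▸ h1
  have DHzero : ∀ m, m < 0 → (lD H).coeff m = 0 := by
    intro m hm
    rw [lD_coeff]
    rcases eq_or_lt_of_le (by omega : m ≤ -1) with rfl | hm1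
    · norm_num
    · rw [HC, if_pos (by omega), mul_zero]
  have DH0 : lD H ≠ 0 := fun hz => DHne (by rw [hz, HahnSeries.coeff_zero])
  have DHord : (lD H).order = 0 := my_order_eq DHne DHzero
  -- coefficient of the products at n
  have cA : (lD g * H).coeff n = ((n : ℂ) * g.coeff n) * PowerSeries.coeff 1 h := by
    have := HahnSeries.coeff_mul_order_add_order (lD g) H
    rw [Dgord, Hord, sub_add_cancel, my_leadingCoeff Dg0, my_leadingCoeff Hne,
      Dgord, Hord, Dgc, H1] at this
    exact this
  have cB : (g * lD H).coeff n = g.coeff n * PowerSeries.coeff 1 h := by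
    have := HahnSeries.coeff_mul_order_add_order g (lD H)
    rw [DHord, ← hn, add_zero, my_leadingCoeff hg0, my_leadingCoeff DH0, DHord, DHc,
      ← hn] at this
    exact this
  -- (1/2 : K) is the constant 1/2
  have half : (1 / 2 : K) = HahnSeries.C (1 / 2 : ℂ) := by
    rw [map_div₀, map_one, map_ofNat]
  have cB' : ((1 / 2 : K) * g * lD H).coeff n = (1 / 2 : ℂ) * (g.coeff n * PowerSeries.coeff 1 h) := by
    rw [mul_assoc, half, HahnSeries.C_apply, HahnSeries.coeff_single_zero_mul, cB]
  -- regularity kills the coefficient at n < 0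
  obtain ⟨p, hp⟩ := hreg
  have hcoeff : (lD g * H + (1 / 2 : K) * g * lD H).coeff n = 0 := by
    rw [← hp, PowerSeries.coeff_coe, if_pos hpos]
  rw [HahnSeries.coeff_add, cA, cB'] at hcoeff
  have key : ((2 * n + 1 : ℤ) : ℂ) * (g.coeff n * PowerSeries.coeff 1 h) = 0 := by
    push_cast
    linear_combination 2 * hcoeff
  have h2n : ((2 * n + 1 : ℤ) : ℂ) ≠ 0 := Int.cast_ne_zero.mpr (by omega)
  exact (mul_ne_zero gn h1) (by
    rcases mul_eq_zero.mp key with hk | hk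
    · exact absurd hk h2n
    · exact hk)

end
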